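/- Let φ : ℂ → ℂ be a continuous bijection with φ(0) = 0 such that for every a, b ∈ ℂ the three points φ(a), φ(a+b), φ(a+2b) are collinear, with φ(a+b) lying on the segment between φ(a) and φ(a+2b). Then φ is additive, i.e., φ maps every line to a line and in fact φ is a real-linear map (φ(x+y) = φ(x) + φ(y) and φ(tx) = tφ(x) for all t ∈ ℝ). -/

import Mathlib

noncomputable def Ddet (z w : ℂ) : ℝ := z.re * w.im - z.im * w.re

lemma Ddet_cont : Continuous fun p : ℂ × ℂ => Ddet p.1 p.2 := by
  unfold Ddet
  fun_prop

lemma Ddet_self (z : ℂ) : Ddet z z = 0 := by simp [Ddet]; ring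

lemma Ddet_swap (z w : ℂ) : Ddet z w = - Ddet w z := by simp [Ddet]; ring

lemma Ddet_smul_left (c : ℝ) (z w : ℂ) : Ddet (c • z) w = c * Ddet z w := by
  simp [Ddet, Complex.smul_re, Complex.smul_im]; ring

lemma Ddet_smul_right (c : ℝ) (z w : ℂ) : Ddet z (c • w) = c * Ddet z w := by
  simp [Ddet, Complex.smul_re, Complex.smul_im]; ring

lemma Ddet_add_left (x y w : ℂ) : Ddet (x + y) w = Ddet x w + Ddet y w := by simp [Ddet]; ring

lemma Ddet_zero_left (w : ℂ) : Ddet 0 w = 0 := by simp [Ddet]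

lemma Ddet_ne_left {z w : ℂ} (h : Ddet z w ≠ 0) : z ≠ 0 := by
  rintro rfl; exact h (by simp [Ddet])

lemma Ddet_ne_right {z w : ℂ} (h : Ddet z w ≠ 0) : w ≠ 0 := by
  rintro rfl; exact h (by simp [Ddet])

/-- If `Ddet z w = 0` and `z ≠ 0` then `w` is a real multiple of `z`. -/
lemma Ddet_eq_zero_imp {z w : ℂ} (h : Ddet z w = 0) (hz : z ≠ 0) :
    ∃ k : ℝ, w = k • z := by
  have hn : z.re ^ 2 + z.im ^ 2 ≠ 0 := by
    have := Complex.normSq_pos.mpr hz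
    rw [Complex.normSq_apply] at this; nlinarith
  unfold Ddet at h
  refine ⟨(z.re * w.re + z.im * w.im) / (z.re ^ 2 + z.im ^ 2), ?_⟩
  apply Complex.ext
  · simp only [Complex.smul_re, smul_eq_mul]
    rw [div_mul_eq_mul_div, eq_div_iff hn]
    linear_combination (-z.im) * h
  · simp only [Complex.smul_im, smul_eq_mul]
    rw [div_mul_eq_mul_div, eq_div_iff hn]
    linear_combination z.re * h

/-- Cramer: two independent vectors span. -/
lemma Ddet_span {u v : ℂ} (h : Ddet u v ≠ 0) (w : ℂ) :
    ∃ a b : ℝ, w = a • u + b • v := by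
  refine ⟨Ddet w v / Ddet u v, Ddet u w / Ddet u v, ?_⟩
  apply Complex.ext <;>
    simp only [Complex.add_re, Complex.add_im, Complex.smul_re, Complex.smul_im, smul_eq_mul] <;>
    rw [div_mul_eq_mul_div, div_mul_eq_mul_div, ← add_div, eq_div_iff h] <;>
    unfold Ddet <;> ring

lemma Ddet_indep {X Y : ℂ} (h : Ddet X Y ≠ 0) {a b : ℝ} (hab : a • X = b • Y) :
    a = 0 ∧ b = 0 := by
  have h1 : a * Ddet X Y = b * Ddet Y Y := by
    rw [← Ddet_smul_left, ← Ddet_smul_left, hab]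
  rw [Ddet_self, mul_zero] at h1
  have ha : a = 0 := by
    rcases mul_eq_zero.mp h1 with h' | h'
    · exact h'
    · exact absurd h' h
  refine ⟨ha, ?_⟩
  rw [ha, zero_smul] at hab
  have hY : Y ≠ 0 := Ddet_ne_right h
  rcases smul_eq_zero.mp hab.symm with h' | h'
  · exact h'
  · exact absurd h' hY

/-- A closed midpoint-closed set containing 0 and 1 contains `[0,1]`. -/
lemma icc_subset_of_midpoint {S : Set ℝ} (hS : IsClosed S) (h0 : (0:ℝ) ∈ S)
    (h1 : (1:ℝ) ∈ S) (hmid : ∀ a ∈ S, ∀ b ∈ S, (a + b) / 2 ∈ S) :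
    Set.Icc (0:ℝ) 1 ⊆ S := by
  have dyad : ∀ n : ℕ, ∀ k : ℕ, k ≤ 2 ^ n → ((k : ℝ) / 2 ^ n) ∈ S := by
    intro n
    induction n with
    | zero =>
      intro k hk
      interval_cases k <;> simpa
    | succ n ih =>
      intro k hk
      rcases Nat.even_or_odd k with ⟨j, hj⟩ | ⟨j, hj⟩
      · subst hj
        have hj' : j ≤ 2 ^ n := by rw [pow_succ] at hk; omega
        have hmem := ih j hj'
        have heq : ((j + j : ℕ) : ℝ) / 2 ^ (n + 1) = (j : ℝ) / 2 ^ n := by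
          push_cast; rw [pow_succ]; field_simp; ring
        rwa [heq]
      · subst hj
        have hj1 : j + 1 ≤ 2 ^ n := by rw [pow_succ] at hk; omega
        have m1 := ih j (by omega)
        have m2 := ih (j + 1) hj1
        have := hmid _ m1 _ m2
        have heq : ((j : ℝ) / 2 ^ n + (j + 1 : ℕ) / 2 ^ n) / 2 = ((2 * j + 1 : ℕ) : ℝ) / 2 ^ (n + 1) := by
          push_cast; rw [pow_succ]; field_simp; ring
        rwa [heq] at this
  intro t ht
  obtain ⟨ht0, ht1⟩ := ht
  have key : ∀ n : ℕ, ((⌊t * 2 ^ n⌋₊ : ℝ) / 2 ^ n) ∈ S := by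
    intro n
    apply dyad
    have hle : t * 2 ^ n ≤ ((2 ^ n : ℕ) : ℝ) := by
      push_cast
      nlinarith [pow_pos (by norm_num : (0:ℝ) < 2) n]
    calc ⌊t * 2 ^ n⌋₊ ≤ ⌊((2 ^ n : ℕ) : ℝ)⌋₊ := Nat.floor_le_floor hle
      _ = 2 ^ n := Nat.floor_natCast _
  -- show the sequence tends to t
  have h2 : ∀ n : ℕ, t - (1/2) ^ n ≤ (⌊t * 2 ^ n⌋₊ : ℝ) / 2 ^ n := by
    intro n
    have hp : (0:ℝ) < 2 ^ n := pow_pos (by norm_num) n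
    rw [le_div_iff₀ hp]
    have h' := Nat.lt_floor_add_one (t * 2 ^ n)
    have hhalf : ((1:ℝ)/2) ^ n * 2 ^ n = 1 := by
      rw [← mul_pow]; norm_num
    nlinarith
  have h3 : ∀ n : ℕ, (⌊t * 2 ^ n⌋₊ : ℝ) / 2 ^ n ≤ t := by
    intro n
    have hp : (0:ℝ) < 2 ^ n := pow_pos (by norm_num) n
    rw [div_le_iff₀ hp]
    exact Nat.floor_le (by positivity)
  have ht2 : Filter.Tendsto (fun n : ℕ => (⌊t * 2 ^ n⌋₊ : ℝ) / 2 ^ n) Filter.atTop (nhds t) := by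
    have hlo : Filter.Tendsto (fun n : ℕ => t - (1/2:ℝ) ^ n) Filter.atTop (nhds t) := by
      have : Filter.Tendsto (fun n : ℕ => ((1:ℝ)/2) ^ n) Filter.atTop (nhds 0) :=
        tendsto_pow_atTop_nhds_zero_of_lt_one (by norm_num) (by norm_num)
      simpa using Filter.Tendsto.sub (tendsto_const_nhds) this
    exact tendsto_of_tendsto_of_tendsto_of_le_of_le hlo tendsto_const_nhds h2 h3
  exact hS.mem_of_tendsto ht2 (Filter.Eventually.of_forall key)

section
variable (φ : ℂ → ℂ) (hc : Continuous φ)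
  (hcol : ∀ a b : ℂ, ∃ t : ℝ, t ∈ Set.Icc (0:ℝ) 1 ∧
    φ (a + b) = (1 - t) • φ a + t • φ (a + 2 * b))

include hc hcol in
lemma collin01 (p q : ℂ) :
    ∀ t ∈ Set.Icc (0:ℝ) 1, Ddet (φ (p + t • (q - p)) - φ p) (φ q - φ p) = 0 := by
  set d := φ q - φ p with hd
  apply icc_subset_of_midpoint (S := {t : ℝ | Ddet (φ (p + t • (q - p)) - φ p) d = 0})
  · apply isClosed_eq _ continuous_const
    have h1 : Continuous fun t : ℝ => φ (p + t • (q - p)) - φ p :=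
      ((hc.comp (by continuity)).sub continuous_const)
    exact ((Complex.continuous_re.comp h1).mul continuous_const).sub
      ((Complex.continuous_im.comp h1).mul continuous_const)
  · show Ddet _ _ = 0
    norm_num [Ddet]
  · show Ddet _ _ = 0
    rw [one_smul]
    have : p + (q - p) = q := by ring
    rw [this, Ddet_self]
  · intro t1 h1 t2 h2
    show Ddet _ _ = 0
    simp only [Set.mem_setOf_eq] at h1 h2
    obtain ⟨u, hu, heq⟩ := hcol (p + t1 • (q - p)) (((t2 - t1)/2) • (q - p))
    have e1 : p + t1 • (q - p) + ((t2 - t1)/2) • (q - p) = p + ((t1 + t2)/2) • (q - p) := by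
      simp only [Complex.real_smul]; push_cast; ring
    have e2 : p + t1 • (q - p) + 2 * (((t2 - t1)/2) • (q - p)) = p + t2 • (q - p) := by
      simp only [Complex.real_smul]; push_cast; ring
    rw [e1, e2] at heq
    have e3 : φ (p + ((t1 + t2)/2) • (q - p)) - φ p
        = (1 - u) • (φ (p + t1 • (q - p)) - φ p) + u • (φ (p + t2 • (q - p)) - φ p) := by
      rw [heq]
      simp only [Complex.real_smul]; push_cast; ring
    rw [e3, Ddet_add_left, Ddet_smul_left, Ddet_smul_left, h1, h2]
    ring

include hc hcol in
lemma collin_all (p q : ℂ) (t : ℝ) :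
    Ddet (φ (p + t • (q - p)) - φ p) (φ q - φ p) = 0 := by
  rcases le_or_gt t 1 with ht1 | ht1
  · rcases le_or_gt 0 t with ht0 | ht0
    · exact collin01 φ hc hcol p q t ⟨ht0, ht1⟩
    · -- t < 0 : p is between x and q
      set x := p + t • (q - p) with hx
      have hu : t / (t - 1) ∈ Set.Icc (0:ℝ) 1 := by
        constructor
        · rw [div_nonneg_iff]; right; constructor <;> linarith
        · rw [div_le_one_iff]; right; right; exact ⟨by linarith, by linarith⟩
      have hP := collin01 φ hc hcol x q (t / (t - 1)) hu
      have hqx : q - x = (1 - t) • (q - p) := by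
        rw [hx]; simp only [Complex.real_smul]; push_cast; ring
      have e1 : x + (t / (t - 1)) • (q - x) = p := by
        rw [hqx, smul_smul]
        have ht1' : t - 1 ≠ 0 := by linarith
        have : t / (t - 1) * (1 - t) = -t := by field_simp; ring
        rw [this, hx]
        simp only [Complex.real_smul]; push_cast; ring
      rw [e1] at hP
      have e2 : φ p - φ x = -(φ x - φ p) := by ring
      have e3 : φ q - φ x = (φ q - φ p) - (φ x - φ p) := by ring
      rw [e2, e3] at hP
      have : Ddet (-(φ x - φ p)) ((φ q - φ p) - (φ x - φ p)) = - Ddet (φ x - φ p) (φ q - φ p) := by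
        simp [Ddet]; ring
      rw [this] at hP
      linarith
  · -- t > 1 : q is between p and x
    set x := p + t • (q - p) with hx
    have ht0 : (0:ℝ) < t := by linarith
    have hu : 1 / t ∈ Set.Icc (0:ℝ) 1 := by
      constructor
      · positivity
      · rw [div_le_one ht0]; linarith
    have hP := collin01 φ hc hcol p x (1 / t) hu
    have e1 : p + (1 / t) • (x - p) = q := by
      have hxp : x - p = t • (q - p) := by rw [hx]; ring
      rw [hxp, smul_smul, one_div, inv_mul_cancel₀ (ne_of_gt ht0), one_smul]
      ring
    rw [e1] at hP
    rw [Ddet_swap] at hP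
    linarith

include hc hcol in
lemma indep_pres (hb : Function.Bijective φ) (p q r : ℂ)
    (h : Ddet (q - p) (r - p) ≠ 0) : Ddet (φ q - φ p) (φ r - φ p) ≠ 0 := by
  have collin_all := collin_all φ hc hcol
  intro h0
  have hqp : q - p ≠ 0 := Ddet_ne_left h
  have hq : q ≠ p := fun e => hqp (by rw [e]; ring)
  have hd : φ q - φ p ≠ 0 := sub_ne_zero.mpr fun e => hq (hb.injective e)
  obtain ⟨k, hk⟩ := Ddet_eq_zero_imp h0 hd
  set d := φ q - φ p with hdd
  set A : Set ℂ := {w | ∃ s : ℝ, φ w = φ p + s • d} with hA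
  have hpA : p ∈ A := ⟨0, by simp⟩
  have hqA : q ∈ A := ⟨1, by rw [one_smul, hdd]; ring⟩
  have hrA : r ∈ A := ⟨k, by rw [← hk]; ring⟩
  have lineA : ∀ u ∈ A, ∀ v ∈ A, ∀ t : ℝ, u + t • (v - u) ∈ A := by
    rintro u ⟨a, ha⟩ v ⟨b, hbv⟩ t
    have hcc := collin_all u v t
    have hvu : φ v - φ u = (b - a) • d := by rw [ha, hbv]; module
    rw [hvu, Ddet_smul_right] at hcc
    rcases mul_eq_zero.mp hcc with hba | hz
    · -- b = a, so φ v = φ u, so v = u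
      have : φ v = φ u := by rw [ha, hbv, sub_eq_zero.mp (by linarith : b - a = 0)]
      have : v = u := hb.injective this
      rw [this]
      simpa using ⟨a, ha⟩
    · rw [Ddet_swap, neg_eq_zero] at hz
      obtain ⟨s, hs⟩ := Ddet_eq_zero_imp hz hd
      exact ⟨a + s, by rw [eq_add_of_sub_eq hs, ha]; module⟩
  have threept : ∀ u ∈ A, ∀ v ∈ A, ∀ w ∈ A, ∀ c : ℝ, c • (u - v) + w ∈ A := by
    intro u hu v hv w hw c
    have hm : u + (1/2 : ℝ) • (w - u) ∈ A := lineA u hu w hw _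
    have hz : v + (2:ℝ) • ((u + (1/2:ℝ) • (w - u)) - v) ∈ A := lineA v hv _ hm 2
    have he : v + (2:ℝ) • ((u + (1/2:ℝ) • (w - u)) - v) = u + w - v := by module
    rw [he] at hz
    have h2 := lineA w hw _ hz c
    have he2 : w + c • ((u + w - v) - w) = c • (u - v) + w := by module
    rwa [he2] at h2
  have hall : ∀ w : ℂ, w ∈ A := by
    intro w
    obtain ⟨a, b, hab⟩ := Ddet_span h (w - p)
    have h1 : p + a • (q - p) ∈ A := lineA p hpA q hqA a
    have h2 : b • (r - p) + (p + a • (q - p)) ∈ A := threept r hrA p hpA _ h1 b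
    have hw : w = b • (r - p) + (p + a • (q - p)) := by
      linear_combination (norm := module) hab
    rwa [hw]
  obtain ⟨z, hz⟩ := hb.surjective (φ p + Complex.I * d)
  obtain ⟨s, hs⟩ := hall z
  rw [hz] at hs
  have : (Complex.I - (s:ℂ)) * d = 0 := by
    rw [Complex.real_smul] at hs
    linear_combination hs
  rcases mul_eq_zero.mp this with h' | h'
  · have : Complex.I = (s:ℂ) := by linear_combination h'
    have := congrArg Complex.im this
    simp at this
  · exact hd h'
end

section
variable (φ : ℂ → ℂ) (hb : Function.Bijective φ)
  (collin_all : ∀ p q : ℂ, ∀ t : ℝ, Ddet (φ (p + t • (q - p)) - φ p) (φ q - φ p) = 0)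
  (indep_pres : ∀ p q r : ℂ, Ddet (q - p) (r - p) ≠ 0 → Ddet (φ q - φ p) (φ r - φ p) ≠ 0)

include hb collin_all indep_pres in
lemma midpt (p q : ℂ) :
    φ ((1/2 : ℝ) • (p + q)) = (1/2 : ℝ) • (φ p + φ q) := by
  rcases eq_or_ne q p with rfl | hqp
  · have h1 : (1/2 : ℝ) • (q + q) = q := by module
    rw [h1]; module
  -- setup
  set u := q - p with hu
  have hu0 : u ≠ 0 := sub_ne_zero.mpr hqp
  set m := (1/2 : ℝ) • (p + q) with hm
  set w := Complex.I * u with hw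
  set r := m + w with hr
  set s := m - w with hs
  -- algebraic identities
  have idm : p + (1/2 : ℝ) • (q - p) = m := by
    rw [hm]; module
  have idm2 : r + (1/2 : ℝ) • (s - r) = m := by
    rw [hr, hs]; module
  have hrp : r - p = (1/2 + Complex.I) * u := by
    rw [hr, hw, hm, hu]; simp only [Complex.real_smul]; push_cast; ring
  have hsp : s - p = (1/2 - Complex.I) * u := by
    rw [hs, hw, hm, hu]; simp only [Complex.real_smul]; push_cast; ring
  have hqs : q - s = (1/2 + Complex.I) * u := by
    rw [hs, hw, hm, hu]; simp only [Complex.real_smul]; push_cast; ring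
  have hqr : q - r = (1/2 - Complex.I) * u := by
    rw [hr, hw, hm, hu]; simp only [Complex.real_smul]; push_cast; ring
  have hps : p - s = (-(1/2) + Complex.I) * u := by
    rw [hs, hw, hm, hu]; simp only [Complex.real_smul]; push_cast; ring
  have hpr : p - r = (-(1/2) - Complex.I) * u := by
    rw [hr, hw, hm, hu]; simp only [Complex.real_smul]; push_cast; ring
  have c1 : (1/2 + Complex.I : ℂ) ≠ 0 := by
    simp [Complex.ext_iff]
  have c2 : (1/2 - Complex.I : ℂ) ≠ 0 := by
    intro h; have := congrArg Complex.im h; simp at this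
  have hrp0 : r - p ≠ 0 := by rw [hrp]; exact mul_ne_zero c1 hu0
  have hsp0 : s - p ≠ 0 := by rw [hsp]; exact mul_ne_zero c2 hu0
  have hqs0 : q - s ≠ 0 := by rw [hqs]; exact mul_ne_zero c1 hu0
  have hqr0 : q - r ≠ 0 := by rw [hqr]; exact mul_ne_zero c2 hu0
  have hrne : r ≠ p := fun e => hrp0 (by rw [e]; ring)
  have hsne : s ≠ p := fun e => hsp0 (by rw [e]; ring)
  -- independence of r-p, s-p
  have hDrs : Ddet (r - p) (s - p) ≠ 0 := by
    rw [hrp, hsp]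
    have hnsq : 0 < u.re ^ 2 + u.im ^ 2 := by
      have := Complex.normSq_pos.mpr hu0
      rw [Complex.normSq_apply] at this; nlinarith
    have : Ddet ((1/2 + Complex.I) * u) ((1/2 - Complex.I) * u)
        = -(u.re ^ 2 + u.im ^ 2) := by
      simp [Ddet, Complex.mul_re, Complex.mul_im, Complex.add_re, Complex.add_im,
        Complex.sub_re, Complex.sub_im, Complex.I_re, Complex.I_im]
      ring
    rw [this]; linarith
  set X := φ r - φ p with hX
  set Y := φ s - φ p with hY
  have hXY : Ddet X Y ≠ 0 := indep_pres p r s hDrs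
  have hX0 : X ≠ 0 := sub_ne_zero.mpr fun e => hrne (hb.injective e)
  have hY0 : Y ≠ 0 := sub_ne_zero.mpr fun e => hsne (hb.injective e)
  -- parallel pair 1 : Ddet X (φ q - φ s) = 0
  have par1 : Ddet X (φ q - φ s) = 0 := by
    by_contra hne
    obtain ⟨a, b, hab⟩ := Ddet_span hne (φ s - φ p)
    obtain ⟨z, hzeq⟩ := hb.surjective (φ p + a • X)
    have d1 : Ddet (φ z - φ p) (φ r - φ p) = 0 := by
      have : φ z - φ p = a • X := by rw [hzeq]; ring
      rw [this, ← hX, Ddet_smul_left, Ddet_self, mul_zero]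
    have d2 : Ddet (φ z - φ s) (φ q - φ s) = 0 := by
      have : φ z - φ s = -b • (φ q - φ s) := by
        rw [hzeq]
        have : φ s - φ p = a • X + b • (φ q - φ s) := hab
        linear_combination (norm := module) -this
      rw [this, Ddet_smul_left, Ddet_self, mul_zero]
    have e1 : Ddet (z - p) (r - p) = 0 := by
      by_contra hcon; exact indep_pres p z r hcon d1
    have e2 : Ddet (z - s) (q - s) = 0 := by
      by_contra hcon; exact indep_pres s z q hcon d2
    obtain ⟨k1, hk1⟩ := Ddet_eq_zero_imp (by rw [Ddet_swap, e1, neg_zero]) hrp0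
    obtain ⟨k2, hk2⟩ := Ddet_eq_zero_imp (by rw [Ddet_swap, e2, neg_zero]) hqs0
    rw [hqs, ← hrp] at hk2
    have hcomb : p - s = (k2 - k1) • (r - p) := by
      linear_combination (norm := module) hk2 - hk1
    rw [hps, hrp, Complex.real_smul] at hcomb
    have hcomb2 : ((-(1/2) + Complex.I : ℂ)) * u = (((k2 - k1 : ℝ) : ℂ) * (1/2 + Complex.I)) * u := by
      linear_combination hcomb
    have hE := mul_right_cancel₀ hu0 hcomb2
    have hre := congrArg Complex.re hE
    have him := congrArg Complex.im hE
    simp [Complex.add_re, Complex.add_im, Complex.mul_re, Complex.mul_im] at hre him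
    linarith
  -- parallel pair 2 : Ddet Y (φ q - φ r) = 0
  have par2 : Ddet Y (φ q - φ r) = 0 := by
    by_contra hne
    obtain ⟨a, b, hab⟩ := Ddet_span hne (φ r - φ p)
    obtain ⟨z, hzeq⟩ := hb.surjective (φ p + a • Y)
    have d1 : Ddet (φ z - φ p) (φ s - φ p) = 0 := by
      have : φ z - φ p = a • Y := by rw [hzeq]; ring
      rw [this, ← hY, Ddet_smul_left, Ddet_self, mul_zero]
    have d2 : Ddet (φ z - φ r) (φ q - φ r) = 0 := by
      have : φ z - φ r = -b • (φ q - φ r) := by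
        rw [hzeq]
        have : φ r - φ p = a • Y + b • (φ q - φ r) := hab
        linear_combination (norm := module) -this
      rw [this, Ddet_smul_left, Ddet_self, mul_zero]
    have e1 : Ddet (z - p) (s - p) = 0 := by
      by_contra hcon; exact indep_pres p z s hcon d1
    have e2 : Ddet (z - r) (q - r) = 0 := by
      by_contra hcon; exact indep_pres r z q hcon d2
    obtain ⟨k1, hk1⟩ := Ddet_eq_zero_imp (by rw [Ddet_swap, e1, neg_zero]) hsp0
    obtain ⟨k2, hk2⟩ := Ddet_eq_zero_imp (by rw [Ddet_swap, e2, neg_zero]) hqr0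
    rw [hqr, ← hsp] at hk2
    have hcomb : p - r = (k2 - k1) • (s - p) := by
      linear_combination (norm := module) hk2 - hk1
    rw [hpr, hsp, Complex.real_smul] at hcomb
    have hcomb2 : ((-(1/2) - Complex.I : ℂ)) * u = (((k2 - k1 : ℝ) : ℂ) * (1/2 - Complex.I)) * u := by
      linear_combination hcomb
    have hE := mul_right_cancel₀ hu0 hcomb2
    have hre := congrArg Complex.re hE
    have him := congrArg Complex.im hE
    simp [Complex.add_re, Complex.add_im, Complex.mul_re, Complex.mul_im] at hre him
    linarith
  -- extract parallelogram relation
  obtain ⟨k, hk⟩ := Ddet_eq_zero_imp par1 hX0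
  obtain ⟨k', hk'⟩ := Ddet_eq_zero_imp par2 hY0
  have e1 : φ q - φ p = k • X + Y := by
    rw [hY]; linear_combination (norm := module) hk
  have e2 : φ q - φ p = X + k' • Y := by
    rw [hX]; linear_combination (norm := module) hk'
  have e3 : (k - 1) • X = (k' - 1) • Y := by
    linear_combination (norm := module) e2 - e1
  obtain ⟨hk1, hk1'⟩ := Ddet_indep hXY e3
  have hkk : k = 1 := by linarith
  have hQP : φ q - φ p = X + Y := by
    rw [e1, hkk]; module
  have hQP0 : X + Y ≠ 0 := by
    rw [← hQP]
    exact sub_ne_zero.mpr fun e => hqp (hb.injective e)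
  have hYX0 : Y - X ≠ 0 := by
    intro h
    apply hXY
    have : X = Y := by linear_combination -h
    rw [this, Ddet_self]
  -- the two diagonal constraints
  have hm1 : Ddet (φ m - φ p) (φ q - φ p) = 0 := by
    have := collin_all p q (1/2); rwa [idm] at this
  have hm2 : Ddet (φ m - φ r) (φ s - φ r) = 0 := by
    have := collin_all r s (1/2); rwa [idm2] at this
  obtain ⟨s1, hs1⟩ := Ddet_eq_zero_imp (by rw [Ddet_swap, hm1, neg_zero]) (hQP ▸ hQP0)
  obtain ⟨s2, hs2⟩ := Ddet_eq_zero_imp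
    (by rw [Ddet_swap, hm2, neg_zero]) (show φ s - φ r ≠ 0 by
      intro h; apply hYX0; rw [hY, hX]; linear_combination h)
  rw [hQP] at hs1
  have hsr : φ s - φ r = Y - X := by rw [hY, hX]; ring
  rw [hsr] at hs2
  -- φ m - φ p = s1 • (X + Y), φ m - φ r = s2 • (Y - X), φ r = φ p + X
  have hcmb : (s1 - 1 + s2) • X = (s2 - s1) • Y := by
    have hrX : φ r - φ p = X := by rw [hX]
    linear_combination (norm := module) hrX + hs2 - hs1
  obtain ⟨hz1, hz2⟩ := Ddet_indep hXY hcmb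
  have hs12 : s1 = 1/2 := by linarith
  -- conclude
  rw [hs12] at hs1
  show φ m = (1/2 : ℝ) • (φ p + φ q)
  linear_combination (norm := module) hs1 - (1/2 : ℝ) • hQP
end


theorem stmt_1 (φ : ℂ → ℂ) (hc : Continuous φ) (hb : Function.Bijective φ)
    (h0 : φ 0 = 0)
    (hcol : ∀ a b : ℂ, ∃ t : ℝ, t ∈ Set.Icc (0:ℝ) 1 ∧
      φ (a + b) = (1 - t) • φ a + t • φ (a + 2 * b)) :
    (∀ x y : ℂ, φ (x + y) = φ x + φ y) ∧ (∀ (t : ℝ) (x : ℂ), φ (t • x) = t • φ x) := by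
  have hmidpt := midpt φ hb (collin_all φ hc hcol)
    (fun p q r h => indep_pres φ hc hcol hb p q r h)
  have hadd : ∀ x y : ℂ, φ (x + y) = φ x + φ y := by
    intro x y
    have h1 := hmidpt 0 (x + y)
    have h2 := hmidpt x y
    have e : (1/2:ℝ) • ((0:ℂ) + (x + y)) = (1/2:ℝ) • (x + y) := by rw [zero_add]
    rw [e, h0, zero_add] at h1
    have h3 : (1/2:ℝ) • φ (x + y) = (1/2:ℝ) • (φ x + φ y) := h1.symm.trans h2
    exact smul_right_injective ℂ (by norm_num : (1/2:ℝ) ≠ 0) h3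
  refine ⟨hadd, fun t x => ?_⟩
  have hcoe : ⇑(AddMonoidHom.mk' φ hadd) = φ := rfl
  have := map_real_smul (AddMonoidHom.mk' φ hadd) (by rw [hcoe]; exact hc) t x
  rwa [hcoe] at this
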